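/- arXiv:1809.08217 — 3 statements merged into one kernel-verified Lean document; each statement's English description precedes it below -/
import Mathlib

section
/- Let f ∈ L∞(𝕋) and let σ : ℤ → ℤ be a bijection. The following are equivalent: (a) for every g ∈ L²(𝕋), ‖S_{σ,N}[f]·g − f·g‖_{L²} → 0 as N → ∞; (b) for every g, h ∈ L²(𝕋), ⟨S_{σ,N}[f]·g − f·g, h⟩_{L²} → 0 as N → ∞; (c) sup_{N∈ℕ} ‖S_{σ,N}[f]‖_∞ < ∞. -/
open MeasureTheory Filter Topology ComplexConjugate
open scoped ENNReal

/-- The torus `ℝ/ℤ` with its Haar probability measure. -/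
noncomputable def muT : Measure UnitAddCircle := AddCircle.haarAddCircle

/-- The rearranged partial Fourier sum `S_{σ,N}[f](t) = ∑_{|n|≤N} f̂(σ n) e^{2πi σ(n) t}`. -/
noncomputable def rSum (f : UnitAddCircle → ℂ) (σ : ℤ ≃ ℤ) (N : ℕ)
    (t : UnitAddCircle) : ℂ :=
  ∑ n ∈ Finset.Icc (-(N : ℤ)) (N : ℤ), fourierCoeff f (σ n) * fourier (σ n) t


instance : IsProbabilityMeasure muT := by unfold muT; infer_instance

lemma muT_def : muT = AddCircle.haarAddCircle := rfl

lemma rSum_continuous (f : UnitAddCircle → ℂ) (σ : ℤ ≃ ℤ) (N : ℕ) :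
    Continuous (rSum f σ N) := by
  unfold rSum
  exact continuous_finset_sum _ fun n _ =>
    continuous_const.mul (map_continuous (fourier (σ n)))

lemma rSum_memTop (f : UnitAddCircle → ℂ) (σ : ℤ ≃ ℤ) (N : ℕ) :
    MemLp (rSum f σ N) ⊤ muT := by
  have hc := rSum_continuous f σ N
  let b : BoundedContinuousFunction UnitAddCircle ℂ :=
    BoundedContinuousFunction.mkOfCompact ⟨_, hc⟩
  exact MemLp.of_bound hc.aestronglyMeasurable ‖b‖
    (Filter.Eventually.of_forall fun x => b.norm_coe_le_norm x)

lemma coeFn_lpSum {ι : Type*} (s : Finset ι) (F : ι → Lp ℂ 2 muT) :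
    (⇑(∑ i ∈ s, F i) : UnitAddCircle → ℂ) =ᵐ[muT] fun t => ∑ i ∈ s, F i t := by
  classical
  induction s using Finset.induction_on with
  | empty => simp only [Finset.sum_empty]; exact Lp.coeFn_zero ℂ 2 muT
  | @insert a s ha ih =>
    rw [Finset.sum_insert ha]
    filter_upwards [Lp.coeFn_add (F a) (∑ i ∈ s, F i), ih] with t h1 h2
    simp only [h1, Pi.add_apply, h2, Finset.sum_insert ha]

lemma fourierCoeff_congr_ae' {f g : UnitAddCircle → ℂ} (h : f =ᵐ[muT] g) (n : ℤ) :
    fourierCoeff f n = fourierCoeff g n := by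
  unfold fourierCoeff
  refine integral_congr_ae ?_
  filter_upwards [h] with t ht
  rw [ht]

lemma tendsto_rSum_L2 (f : UnitAddCircle → ℂ) (hf2 : MemLp f 2 muT) (σ : ℤ ≃ ℤ) :
    Tendsto (fun N => eLpNorm (fun t => rSum f σ N t - f t) 2 muT) atTop (𝓝 0) := by
  set F : Lp ℂ 2 muT := hf2.toLp f with hFdef
  have hcoeff : ∀ n, fourierCoeff (⇑F : UnitAddCircle → ℂ) n = fourierCoeff f n := fun n =>
    fourierCoeff_congr_ae' (hf2.coeFn_toLp) n
  have hS : HasSum (fun i : ℤ => fourierCoeff (⇑F : UnitAddCircle → ℂ) i • fourierLp 2 i) F :=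
    hasSum_fourier_series_L2 F
  set D : ℕ → Finset ℤ := fun N => (Finset.Icc (-(N : ℤ)) (N : ℤ)).map σ.toEmbedding with hD
  have hmono : Monotone D := by
    intro a b hab
    refine Finset.map_subset_map.mpr (Finset.Icc_subset_Icc ?_ ?_) <;> omega
  have hDtop : Tendsto D atTop atTop := by
    refine tendsto_atTop_finset_of_monotone hmono fun i => ?_
    refine ⟨(σ.symm i).natAbs, ?_⟩
    simp only [hD, Finset.mem_map, Finset.mem_Icc, Equiv.toEmbedding_apply]
    exact ⟨σ.symm i, ⟨by omega, by omega⟩, by simp⟩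
  have htend : Tendsto (fun N => ∑ i ∈ D N,
      fourierCoeff (⇑F : UnitAddCircle → ℂ) i • fourierLp 2 i) atTop (𝓝 F) := hS.comp hDtop
  set Q : ℕ → Lp ℂ 2 muT := fun N => ∑ n ∈ Finset.Icc (-(N : ℤ)) (N : ℤ),
    fourierCoeff f (σ n) • fourierLp 2 (σ n) with hQdef
  have hQeq : (fun N => ∑ i ∈ D N,
      fourierCoeff (⇑F : UnitAddCircle → ℂ) i • fourierLp 2 i) = Q := by
    funext N
    rw [hQdef, hD]
    simp only [Finset.sum_map, Equiv.toEmbedding_apply, hcoeff]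
    rfl
  rw [hQeq] at htend
  have hnorm : Tendsto (fun N => ‖Q N - F‖) atTop (𝓝 0) := by
    have := tendsto_iff_norm_sub_tendsto_zero.mp htend
    exact this
  have hae : ∀ N, (⇑(Q N - F) : UnitAddCircle → ℂ) =ᵐ[muT]
      fun t => rSum f σ N t - f t := by
    intro N
    have h1 : (⇑(Q N) : UnitAddCircle → ℂ) =ᵐ[muT] rSum f σ N := by
      have h2 := coeFn_lpSum (Finset.Icc (-(N : ℤ)) (N : ℤ))
        (fun n => fourierCoeff f (σ n) • fourierLp 2 (σ n))
      have h3 : ∀ᵐ t ∂muT, ∀ n ∈ Finset.Icc (-(N : ℤ)) (N : ℤ),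
          (fourierCoeff f (σ n) • fourierLp 2 (σ n) : Lp ℂ 2 muT) t
            = fourierCoeff f (σ n) * fourier (σ n) t := by
        refine (MeasureTheory.ae_ball_iff
          (Finset.Icc (-(N : ℤ)) (N : ℤ)).countable_toSet).mpr fun n _ => ?_
        filter_upwards [Lp.coeFn_smul (fourierCoeff f (σ n)) (fourierLp 2 (σ n) : Lp ℂ 2 muT),
          coeFn_fourierLp 2 (σ n)] with t ht ht'
        simp only [ht, Pi.smul_apply, smul_eq_mul, ht']
      filter_upwards [h2, h3] with t h2t h3t
      rw [h2t]
      exact Finset.sum_congr rfl h3t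
    filter_upwards [Lp.coeFn_sub (Q N) F, h1, hf2.coeFn_toLp] with t hsub h1t h2t
    simp only [hsub, Pi.sub_apply, h1t]
    rw [hFdef, h2t]
  have heq : ∀ N, eLpNorm (fun t => rSum f σ N t - f t) 2 muT
      = ENNReal.ofReal ‖Q N - F‖ := by
    intro N
    rw [← eLpNorm_congr_ae (hae N), Lp.norm_def,
      ENNReal.ofReal_toReal (Lp.eLpNorm_ne_top (Q N - F))]
  simp only [heq]
  simpa using ENNReal.tendsto_ofReal hnorm

noncomputable def mulCLM {m : UnitAddCircle → ℂ} (hm : MemLp m ⊤ muT) :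
    Lp ℂ 2 muT →L[ℂ] Lp ℂ 2 muT :=
  LinearMap.mkContinuous
    { toFun := fun g => ((Lp.memLp g).smul (r := 2) hm).toLp (m • ⇑g)
      map_add' := by
        intro g g'
        rw [← MemLp.toLp_add]
        refine MemLp.toLp_congr _ _ ?_
        filter_upwards [Lp.coeFn_add g g'] with t ht
        simp only [Pi.smul_apply, Pi.mul_apply, ht, Pi.add_apply, smul_eq_mul]
        ring
      map_smul' := by
        intro c g
        simp only [RingHom.id_apply]
        rw [← MemLp.toLp_const_smul c ((Lp.memLp g).smul (r := 2) hm)]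
        refine MemLp.toLp_congr _ _ ?_
        filter_upwards [Lp.coeFn_smul c g] with t ht
        simp only [Pi.smul_apply, Pi.mul_apply, ht, smul_eq_mul]
        ring }
    (eLpNorm m ⊤ muT).toReal
    (fun g => by
      simp only [LinearMap.coe_mk, AddHom.coe_mk]
      rw [Lp.norm_toLp _ ((Lp.memLp g).smul (r := 2) hm), Lp.norm_def]
      rw [← ENNReal.toReal_mul]
      refine ENNReal.toReal_mono ?_ ?_
      · exact ENNReal.mul_ne_top hm.eLpNorm_ne_top (Lp.eLpNorm_ne_top g)
      · exact eLpNorm_smul_le_eLpNorm_top_mul_eLpNorm 2 (Lp.aestronglyMeasurable g) m)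

lemma mulCLM_coeFn {m : UnitAddCircle → ℂ} (hm : MemLp m ⊤ muT) (g : Lp ℂ 2 muT) :
    (⇑(mulCLM hm g) : UnitAddCircle → ℂ) =ᵐ[muT] fun t => m t * g t :=
  MemLp.coeFn_toLp ((Lp.memLp g).smul (r := 2) hm)

lemma eLpNorm_top_le_of_opBound {m : UnitAddCircle → ℂ} (hm : MemLp m ⊤ muT) {C : ℝ}
    (hC : ∀ g : UnitAddCircle → ℂ, MemLp g 2 muT →
      eLpNorm (fun t => m t * g t) 2 muT ≤ ENNReal.ofReal C * eLpNorm g 2 muT) :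
    eLpNorm m ⊤ muT ≤ ENNReal.ofReal C := by
  by_contra hlt
  push_neg at hlt
  set m' := hm.1.mk m with hm'def
  have hmm' : m =ᵐ[muT] m' := hm.1.ae_eq_mk
  have hm'meas : StronglyMeasurable m' := hm.1.stronglyMeasurable_mk
  rw [eLpNorm_congr_ae hmm', eLpNorm_exponent_top, eLpNormEssSup] at hlt
  obtain ⟨b, hb1, hb2⟩ := exists_between hlt
  have hbtop : b ≠ ⊤ := ne_top_of_lt hb2
  set A := {x | b < (‖m' x‖₊ : ℝ≥0∞)} with hAdef
  have hA : MeasurableSet A := by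
    have : Measurable fun x => (‖m' x‖₊ : ℝ≥0∞) :=
      hm'meas.measurable.nnnorm.coe_nnreal_ennreal
    exact measurableSet_lt measurable_const this
  have hμA : muT A ≠ 0 := by
    intro h0
    have hle : essSup (fun x => (‖m' x‖₊ : ℝ≥0∞)) muT ≤ b := by
      refine essSup_le_of_ae_le b ?_
      rw [Filter.EventuallyLE, ae_iff]
      convert h0 using 2
      ext x
      simp [hAdef, not_le]
    exact absurd hle (not_le.mpr hb2)
  have hμAtop : muT A ≠ ⊤ := measure_ne_top _ _
  set β := b.toNNReal with hβdef
  have hg2 : MemLp (A.indicator fun _ => (1 : ℂ)) 2 muT :=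
    memLp_indicator_const 2 hA 1 (Or.inr hμAtop)
  have hind : eLpNorm (A.indicator fun _ => (1 : ℂ)) 2 muT = muT A ^ (1 / (2:ℝ)) := by
    rw [eLpNorm_indicator_const hA two_ne_zero ENNReal.ofNat_ne_top]
    simp
  have hlow : (β : ℝ≥0∞) * muT A ^ (1 / (2:ℝ))
      ≤ eLpNorm (fun t => m t * (A.indicator (fun _ => (1:ℂ)) t)) 2 muT := by
    have hmono : eLpNorm (A.indicator fun _ => ((β : ℝ) : ℂ)) 2 muT
        ≤ eLpNorm (fun t => m' t * (A.indicator (fun _ => (1:ℂ)) t)) 2 muT := by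
      refine eLpNorm_mono_nnnorm fun x => ?_
      by_cases hx : x ∈ A
      · simp only [Set.indicator_of_mem hx, mul_one]
        have : b ≤ (‖m' x‖₊ : ℝ≥0∞) := (le_of_lt hx)
        have hβle : β ≤ ‖m' x‖₊ := by
          rw [← ENNReal.coe_toNNReal hbtop] at this
          exact_mod_cast this
        calc ‖((β : ℝ) : ℂ)‖₊ = β := by simp
          _ ≤ ‖m' x‖₊ := hβle
      · simp [Set.indicator_of_notMem hx]
    have hcongr : eLpNorm (fun t => m' t * (A.indicator (fun _ => (1:ℂ)) t)) 2 muT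
        = eLpNorm (fun t => m t * (A.indicator (fun _ => (1:ℂ)) t)) 2 muT := by
      refine eLpNorm_congr_ae ?_
      filter_upwards [hmm'] with t ht
      rw [ht]
    rw [hcongr] at hmono
    refine le_trans ?_ hmono
    rw [eLpNorm_indicator_const hA two_ne_zero ENNReal.ofNat_ne_top]
    simp only [ENNReal.toReal_ofNat]
    gcongr
    · exact le_of_eq (by rw [enorm_eq_nnnorm]; simp)
  have hup : eLpNorm (fun t => m t * (A.indicator (fun _ => (1:ℂ)) t)) 2 muT
      ≤ ENNReal.ofReal C * muT A ^ (1 / (2:ℝ)) := by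
    rw [← hind]
    exact hC _ hg2
  have hchain : (β : ℝ≥0∞) * muT A ^ (1 / (2:ℝ)) ≤ ENNReal.ofReal C * muT A ^ (1 / (2:ℝ)) :=
    le_trans hlow hup
  have hpow0 : muT A ^ (1 / (2:ℝ)) ≠ 0 := by
    simp [ENNReal.rpow_eq_zero_iff, hμA, hμAtop]
  have hpowtop : muT A ^ (1 / (2:ℝ)) ≠ ⊤ := by
    simp [ENNReal.rpow_eq_top_iff, hμA, hμAtop]
  have hbC : (β : ℝ≥0∞) ≤ ENNReal.ofReal C :=
    (ENNReal.mul_le_mul_iff_left hpow0 hpowtop).mp hchain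
  rw [hβdef, ENNReal.coe_toNNReal hbtop] at hbC
  exact absurd hbC (not_le.mpr hb1)

lemma integrable_mul_conj {u v : UnitAddCircle → ℂ} (hu : MemLp u 2 muT)
    (hv : MemLp v 2 muT) : Integrable (fun t => u t * conj (v t)) muT := by
  have h := MeasureTheory.L2.integrable_inner (𝕜 := ℂ) (hv.toLp v) (hu.toLp u)
  refine h.congr ?_
  filter_upwards [hv.coeFn_toLp, hu.coeFn_toLp] with t h1 h2
  simp only [RCLike.inner_apply, h1, h2]

lemma norm_integral_mul_conj_le {u v : UnitAddCircle → ℂ} (hu : MemLp u 2 muT)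
    (hv : MemLp v 2 muT) :
    ‖∫ t, u t * conj (v t) ∂muT‖
      ≤ (eLpNorm u 2 muT).toReal * (eLpNorm v 2 muT).toReal := by
  have h1 : (∫ t, u t * conj (v t) ∂muT) = inner (𝕜 := ℂ) (hv.toLp v) (hu.toLp u) := by
    rw [L2.inner_def]
    refine integral_congr_ae ?_
    filter_upwards [hv.coeFn_toLp, hu.coeFn_toLp] with t h1 h2
    simp only [RCLike.inner_apply, h1, h2]
  rw [h1]
  calc ‖inner (𝕜 := ℂ) (hv.toLp v) (hu.toLp u)‖ ≤ ‖hv.toLp v‖ * ‖hu.toLp u‖ :=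
        norm_inner_le_norm _ _
    _ = (eLpNorm u 2 muT).toReal * (eLpNorm v 2 muT).toReal := by
        rw [Lp.norm_toLp, Lp.norm_toLp]; ring

lemma memℒp_mul_of_top {m g : UnitAddCircle → ℂ} (hm : MemLp m ⊤ muT)
    (hg : MemLp g 2 muT) : MemLp (fun t => m t * g t) 2 muT := by
  have h := hg.smul (r := 2) hm
  refine h.ae_eq (Filter.Eventually.of_forall fun t => ?_)
  simp [Pi.smul_apply, smul_eq_mul]

lemma memℒp_rSum_mul {f : UnitAddCircle → ℂ} {g : UnitAddCircle → ℂ} (σ : ℤ ≃ ℤ) (N : ℕ)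
    (hg : MemLp g 2 muT) : MemLp (fun t => rSum f σ N t * g t) 2 muT :=
  memℒp_mul_of_top (rSum_memTop f σ N) hg

lemma AtoB (f : UnitAddCircle → ℂ) (hf : MemLp f ⊤ muT) (σ : ℤ ≃ ℤ)
    (hA : ∀ g : UnitAddCircle → ℂ, MemLp g 2 muT →
      Tendsto (fun N => eLpNorm (fun t => rSum f σ N t * g t - f t * g t) 2 muT)
        atTop (nhds 0)) :
    ∀ g h : UnitAddCircle → ℂ, MemLp g 2 muT → MemLp h 2 muT →
      Tendsto (fun N => ∫ t, (rSum f σ N t * g t - f t * g t) * conj (h t) ∂muT)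
        atTop (nhds 0) := by
  intro g h hg hh
  have hw : ∀ N, MemLp (fun t => rSum f σ N t * g t - f t * g t) 2 muT := fun N =>
    (memℒp_rSum_mul σ N hg).sub (memℒp_mul_of_top hf hg)
  rw [tendsto_zero_iff_norm_tendsto_zero]
  refine squeeze_zero (fun N => norm_nonneg _)
    (fun N => norm_integral_mul_conj_le (hw N) hh) ?_
  have h1 : Tendsto (fun N =>
      (eLpNorm (fun t => rSum f σ N t * g t - f t * g t) 2 muT).toReal) atTop (𝓝 0) := by
    have := (ENNReal.tendsto_toReal (by simp : (0:ℝ≥0∞) ≠ ⊤)).comp (hA g hg)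
    exact this
  simpa using h1.mul_const (eLpNorm h 2 muT).toReal

lemma CtoA (f : UnitAddCircle → ℂ) (hf : MemLp f ⊤ muT) (σ : ℤ ≃ ℤ)
    (hC : (⨆ N : ℕ, eLpNorm (fun t => rSum f σ N t) ⊤ muT) < ⊤) :
    ∀ g : UnitAddCircle → ℂ, MemLp g 2 muT →
      Tendsto (fun N => eLpNorm (fun t => rSum f σ N t * g t - f t * g t) 2 muT)
        atTop (nhds 0) := by
  intro g hg
  set K : ℝ≥0∞ := (⨆ N : ℕ, eLpNorm (fun t => rSum f σ N t) ⊤ muT) + eLpNorm f ⊤ muT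
    with hKdef
  have hKtop : K ≠ ⊤ := by
    rw [hKdef]
    exact ENNReal.add_ne_top.mpr ⟨hC.ne, hf.eLpNorm_ne_top⟩
  have hdiffTop : ∀ N, eLpNorm (fun t => rSum f σ N t - f t) ⊤ muT ≤ K := by
    intro N
    refine le_trans (eLpNorm_sub_le (rSum_continuous f σ N).aestronglyMeasurable hf.1
      le_top) ?_
    rw [hKdef]
    gcongr
    exact le_iSup (fun N => eLpNorm (fun t => rSum f σ N t) ⊤ muT) N
  have hdiffAE : ∀ N, AEStronglyMeasurable (fun t => rSum f σ N t - f t) muT := fun N =>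
    (rSum_continuous f σ N).aestronglyMeasurable.sub hf.1
  have hf2 : MemLp f 2 muT := hf.mono_exponent le_top
  have hL2 := tendsto_rSum_L2 f hf2 σ
  rw [ENNReal.tendsto_nhds_zero]
  intro ε hε
  -- choose a bounded (simple) approximation of g
  set δ : ℝ≥0∞ := ε / 2 / (K + 1) with hδdef
  have hδ0 : δ ≠ 0 := by
    rw [hδdef]
    refine ENNReal.div_ne_zero.mpr ⟨?_, ?_⟩
    · exact ENNReal.div_ne_zero.mpr ⟨hε.ne', ENNReal.ofNat_ne_top⟩
    · exact ENNReal.add_ne_top.mpr ⟨hKtop, by simp⟩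
  obtain ⟨s, hs, hsmem⟩ := hg.exists_simpleFunc_eLpNorm_sub_lt ENNReal.ofNat_ne_top hδ0
  have hsTop : MemLp (⇑s) ⊤ muT := s.memLp_top muT
  set δ₂ : ℝ≥0∞ := ε / 2 / (eLpNorm (⇑s) ⊤ muT + 1) with hδ₂def
  have hδ₂0 : 0 < δ₂ := by
    rw [hδ₂def]
    refine ENNReal.div_pos ?_ ?_
    · exact ENNReal.div_ne_zero.mpr ⟨hε.ne', ENNReal.ofNat_ne_top⟩
    · exact ENNReal.add_ne_top.mpr ⟨hsTop.eLpNorm_ne_top, by simp⟩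
  filter_upwards [ENNReal.tendsto_nhds_zero.mp hL2 δ₂ hδ₂0] with N hN
  have hsplit : (fun t => rSum f σ N t * g t - f t * g t)
      = fun t => (rSum f σ N t - f t) * (g t - s t) + (rSum f σ N t - f t) * s t := by
    funext t; ring
  rw [hsplit]
  have hterm1 : eLpNorm (fun t => (rSum f σ N t - f t) * (g t - s t)) 2 muT
      ≤ K * δ := by
    have := eLpNorm_smul_le_eLpNorm_top_mul_eLpNorm 2
      (hg.1.sub s.aestronglyMeasurable) (fun t => rSum f σ N t - f t) (μ := muT)
    refine le_trans this ?_
    exact mul_le_mul' (hdiffTop N) hs.le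
  have hterm2 : eLpNorm (fun t => (rSum f σ N t - f t) * s t) 2 muT
      ≤ eLpNorm (⇑s) ⊤ muT * δ₂ := by
    have heq : eLpNorm (fun t => (rSum f σ N t - f t) * s t) 2 muT
        = eLpNorm (fun t => s t * (rSum f σ N t - f t)) 2 muT := by
      refine eLpNorm_congr_ae (Filter.Eventually.of_forall fun t => ?_)
      ring
    rw [heq]
    have := eLpNorm_smul_le_eLpNorm_top_mul_eLpNorm 2 (hdiffAE N) (⇑s) (μ := muT)
    refine le_trans this ?_
    exact mul_le_mul' le_rfl hN
  calc eLpNorm (fun t => (rSum f σ N t - f t) * (g t - s t)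
        + (rSum f σ N t - f t) * s t) 2 muT
      ≤ eLpNorm (fun t => (rSum f σ N t - f t) * (g t - s t)) 2 muT
        + eLpNorm (fun t => (rSum f σ N t - f t) * s t) 2 muT := by
        refine eLpNorm_add_le ((hdiffAE N).mul (hg.1.sub s.aestronglyMeasurable))
          ((hdiffAE N).mul s.aestronglyMeasurable) one_le_two
    _ ≤ K * δ + eLpNorm (⇑s) ⊤ muT * δ₂ := add_le_add hterm1 hterm2
    _ ≤ ε / 2 + ε / 2 := by
        refine add_le_add ?_ ?_
        · rw [hδdef]
          calc K * (ε / 2 / (K + 1)) ≤ (K + 1) * (ε / 2 / (K + 1)) :=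
                mul_le_mul' le_self_add le_rfl
            _ ≤ ε / 2 := ENNReal.mul_div_le
        · rw [hδ₂def]
          calc eLpNorm (⇑s) ⊤ muT * (ε / 2 / (eLpNorm (⇑s) ⊤ muT + 1))
              ≤ (eLpNorm (⇑s) ⊤ muT + 1) * (ε / 2 / (eLpNorm (⇑s) ⊤ muT + 1)) :=
                mul_le_mul' le_self_add le_rfl
            _ ≤ ε / 2 := ENNReal.mul_div_le
    _ = ε := ENNReal.add_halves ε

lemma BtoC (f : UnitAddCircle → ℂ) (hf : MemLp f ⊤ muT) (σ : ℤ ≃ ℤ)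
    (hB : ∀ g h : UnitAddCircle → ℂ, MemLp g 2 muT → MemLp h 2 muT →
      Tendsto (fun N => ∫ t, (rSum f σ N t * g t - f t * g t) * conj (h t) ∂muT)
        atTop (nhds 0)) :
    (⨆ N : ℕ, eLpNorm (fun t => rSum f σ N t) ⊤ muT) < ⊤ := by
  have hm : ∀ N : ℕ, MemLp (rSum f σ N) ⊤ muT := rSum_memTop f σ
  set T : ℕ → (Lp ℂ 2 muT →L[ℂ] Lp ℂ 2 muT) := fun N => mulCLM (hm N) with hTdef
  -- pointwise (in g) boundedness of the norms ‖T N g‖, via Banach–Steinhaus on functionals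
  have key1 : ∀ g : Lp ℂ 2 muT, ∃ C, ∀ N, ‖T N g‖ ≤ C := by
    intro g
    have hBg : ∀ h : Lp ℂ 2 muT, ∃ C, ∀ N, ‖innerSL ℂ (T N g) h‖ ≤ C := by
      intro h
      have ht := hB (⇑g) (⇑h) (Lp.memLp g) (Lp.memLp h)
      have hbdd : BddAbove (Set.range fun N =>
          ‖∫ t, (rSum f σ N t * g t - f t * g t) * conj (h t) ∂muT‖) := by
        have := ht.norm
        simpa using this.bddAbove_range
      obtain ⟨C0, hC0⟩ := hbdd
      refine ⟨C0 + ‖∫ t, (f t * g t) * conj (h t) ∂muT‖, fun N => ?_⟩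
      have hint1 : Integrable
          (fun t => (rSum f σ N t * g t - f t * g t) * conj (h t)) muT :=
        integrable_mul_conj ((memℒp_rSum_mul σ N (Lp.memLp g)).sub
          (memℒp_mul_of_top hf (Lp.memLp g))) (Lp.memLp h)
      have hint2 : Integrable (fun t => (f t * g t) * conj (h t)) muT :=
        integrable_mul_conj (memℒp_mul_of_top hf (Lp.memLp g)) (Lp.memLp h)
      have hinner : innerSL ℂ (T N g) h
          = conj (∫ t, (rSum f σ N t * g t) * conj (h t) ∂muT) := by
        rw [innerSL_apply_apply, L2.inner_def, ← integral_conj]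
        refine integral_congr_ae ?_
        filter_upwards [mulCLM_coeFn (hm N) g] with t htt
        simp only [RCLike.inner_apply, htt]
        simp only [map_mul, RingHomCompTriple.comp_apply, RingHom.id_apply,
          Complex.conj_conj]
        change _ * conj (((mulCLM (hm N)) g : UnitAddCircle → ℂ) t) = _
        rw [htt, map_mul]
        ring
      have hsplit : (∫ t, (rSum f σ N t * g t) * conj (h t) ∂muT)
          = (∫ t, (rSum f σ N t * g t - f t * g t) * conj (h t) ∂muT)
            + ∫ t, (f t * g t) * conj (h t) ∂muT := by
        rw [← integral_add hint1 hint2]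
        refine integral_congr_ae (Filter.Eventually.of_forall fun t => ?_)
        ring
      rw [hinner, hsplit]
      calc ‖conj ((∫ t, (rSum f σ N t * g t - f t * g t) * conj (h t) ∂muT)
            + ∫ t, (f t * g t) * conj (h t) ∂muT)‖
          = ‖(∫ t, (rSum f σ N t * g t - f t * g t) * conj (h t) ∂muT)
            + ∫ t, (f t * g t) * conj (h t) ∂muT‖ := RCLike.norm_conj _
        _ ≤ ‖∫ t, (rSum f σ N t * g t - f t * g t) * conj (h t) ∂muT‖
            + ‖∫ t, (f t * g t) * conj (h t) ∂muT‖ := norm_add_le _ _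
        _ ≤ C0 + ‖∫ t, (f t * g t) * conj (h t) ∂muT‖ := by
            gcongr
            exact hC0 ⟨N, rfl⟩
    obtain ⟨C, hC⟩ := banach_steinhaus hBg
    exact ⟨C, fun N => by
      have := hC N
      rwa [innerSL_apply_norm] at this⟩
  obtain ⟨C, hC⟩ := banach_steinhaus key1
  have hC0 : 0 ≤ C := le_trans (norm_nonneg (T 0)) (hC 0)
  have hbound : ∀ N, eLpNorm (rSum f σ N) ⊤ muT ≤ ENNReal.ofReal C := by
    intro N
    refine eLpNorm_top_le_of_opBound (hm N) fun g hg => ?_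
    have h1 : eLpNorm (fun t => rSum f σ N t * g t) 2 muT
        = ENNReal.ofReal ‖T N (hg.toLp g)‖ := by
      have hae : (⇑(T N (hg.toLp g)) : UnitAddCircle → ℂ) =ᵐ[muT]
          fun t => rSum f σ N t * g t := by
        filter_upwards [mulCLM_coeFn (hm N) (hg.toLp g), hg.coeFn_toLp] with t h1 h2
        rw [h1, h2]
      rw [← eLpNorm_congr_ae hae, Lp.norm_def,
        ENNReal.ofReal_toReal (Lp.eLpNorm_ne_top _)]
    rw [h1]
    calc ENNReal.ofReal ‖T N (hg.toLp g)‖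
        ≤ ENNReal.ofReal (C * ‖hg.toLp g‖) := by
          refine ENNReal.ofReal_le_ofReal ?_
          calc ‖T N (hg.toLp g)‖ ≤ ‖T N‖ * ‖hg.toLp g‖ := (T N).le_opNorm _
            _ ≤ C * ‖hg.toLp g‖ := by gcongr; exact hC N
      _ = ENNReal.ofReal C * ENNReal.ofReal ‖hg.toLp g‖ :=
          ENNReal.ofReal_mul hC0
      _ = ENNReal.ofReal C * eLpNorm g 2 muT := by
          rw [Lp.norm_toLp, ENNReal.ofReal_toReal hg.eLpNorm_ne_top]
  calc (⨆ N : ℕ, eLpNorm (fun t => rSum f σ N t) ⊤ muT) ≤ ENNReal.ofReal C :=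
        iSup_le fun N => hbound N
    _ < ⊤ := ENNReal.ofReal_lt_top

/-- For `f ∈ L∞` and a fixed bijection `σ`, SOT convergence, WOT convergence, and uniform
boundedness of `‖S_{σ,N}[f]‖_∞` are all equivalent. -/
theorem stmt_2 (f : UnitAddCircle → ℂ) (hf : MemLp f ⊤ muT) (σ : ℤ ≃ ℤ) :
    ((∀ g : UnitAddCircle → ℂ, MemLp g 2 muT →
        Tendsto (fun N => eLpNorm (fun t => rSum f σ N t * g t - f t * g t) 2 muT)
          atTop (nhds 0)) ↔
      (∀ g h : UnitAddCircle → ℂ, MemLp g 2 muT → MemLp h 2 muT →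
        Tendsto (fun N => ∫ t, (rSum f σ N t * g t - f t * g t) * conj (h t) ∂muT)
          atTop (nhds 0))) ∧
    ((∀ g h : UnitAddCircle → ℂ, MemLp g 2 muT → MemLp h 2 muT →
        Tendsto (fun N => ∫ t, (rSum f σ N t * g t - f t * g t) * conj (h t) ∂muT)
          atTop (nhds 0)) ↔
      (⨆ N : ℕ, eLpNorm (fun t => rSum f σ N t) ⊤ muT) < ⊤) := by
  refine ⟨⟨AtoB f hf σ, fun hB => CtoA f hf σ (BtoC f hf σ hB)⟩,
    ⟨BtoC f hf σ, fun hC => AtoB f hf σ (CtoA f hf σ hC)⟩⟩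
end

section
/- Let C₀ ≥ 1 and suppose there exists a sequence of signs (ε_n)_{n≥0} ⊆ {−1,1} such that ‖∑_{n=0}^{N} ε_n e^{2πin·}‖_∞ ≤ C₀·√(N+1) for infinitely many N ∈ ℕ. Then for every c with 0 < c < (2√2)/(3√(3π)·C₀) and every Lebesgue measurable set E ⊆ 𝕋 with |E| > 0, there exist a continuous function f on 𝕋 with ‖f‖_∞ ≤ 1 and a sign sequence ε ∈ {−1,1}^ℤ such that ‖T_ε[f]·𝟙_E‖_{L²} ≥ c. -/
open MeasureTheory Filter Topology ComplexConjugate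
open scoped ENNReal Real

/-- A sequence of signs indexed by `ℤ`. -/
def IsSign (ε : ℤ → ℝ) : Prop := ∀ n, ε n = 1 ∨ ε n = -1

/-- The sign-changed partial Fourier sum `T_{ε,N}[f](t) = ∑_{|n|≤N} ε_n f̂(n) e^{2πint}`. -/
noncomputable def sgnSum (f : UnitAddCircle → ℂ) (ε : ℤ → ℝ) (N : ℕ)
    (t : UnitAddCircle) : ℂ :=
  ∑ n ∈ Finset.Icc (-(N : ℤ)) (N : ℤ), (ε n : ℂ) * fourierCoeff f n * fourier n t

lemma fourierCoeff_fourier1 (i n : ℤ) :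
    fourierCoeff (T := 1) (⇑(fourier i)) n = if n = i then 1 else 0 := by
  rw [fourierCoeff]
  have h : ∀ t : UnitAddCircle, fourier (-n) t • fourier i t = fourier (-n + i) t := by
    intro t; rw [smul_eq_mul, ← fourier_add]
  simp_rw [h]
  split_ifs with hni
  · subst hni
    simp_rw [neg_add_cancel]
    have h0 : ⇑(fourier (T := 1) 0) = (fun _ => 1 : UnitAddCircle → ℂ) := by
      ext1 t; exact fourier_zero
    rw [h0, integral_const, probReal_univ, one_smul]
  · have hij : -n + i ≠ 0 := by omega
    exact integral_eq_zero_of_add_right_eq_neg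
      (fourier_add_half_inv_index hij zero_lt_one)

lemma fourierCoeff_finsum {ι : Type*} (s : Finset ι) (g : ι → UnitAddCircle → ℂ)
    (hg : ∀ i, Continuous (g i)) (n : ℤ) :
    fourierCoeff (fun t => ∑ i ∈ s, g i t) n = ∑ i ∈ s, fourierCoeff (g i) n := by
  rw [fourierCoeff]
  have h : ∀ t : UnitAddCircle, fourier (-n) t • ∑ i ∈ s, g i t
      = ∑ i ∈ s, fourier (-n) t • g i t := by
    intro t; rw [Finset.smul_sum]
  simp_rw [h]
  rw [integral_finset_sum]
  · rfl
  · intro i _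
    exact (((fourier (-n)).continuous.smul (hg i)).integrable_of_hasCompactSupport
      (HasCompactSupport.of_compactSpace _))

lemma dirichlet_lower (N : ℕ) (y : ℝ) (hy : |y| ≤ 1 / (3 * π * (N + 1))) :
    (2 / 3 : ℝ) * (N + 1)
      ≤ ‖∑ n ∈ Finset.range (N + 1), Complex.exp (2 * π * Complex.I * n * y)‖ := by
  have hπ : (0:ℝ) < π := Real.pi_pos
  set S := ∑ n ∈ Finset.range (N + 1), Complex.exp (2 * π * Complex.I * n * y) with hS
  set w := Complex.exp ((-(π * N * y) : ℝ) * Complex.I) with hw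
  have hre : (w * S).re = ∑ n ∈ Finset.range (N + 1), Real.cos ((2 * n - N) * π * y) := by
    rw [hS, Finset.mul_sum]
    rw [Complex.re_sum]
    refine Finset.sum_congr rfl fun n _ => ?_
    have h : w * Complex.exp (2 * π * Complex.I * n * y)
        = Complex.exp ((((2 * n - N) * π * y : ℝ)) * Complex.I) := by
      rw [hw, ← Complex.exp_add]
      congr 1
      push_cast
      ring
    rw [h, Complex.exp_ofReal_mul_I_re]
  have hterm : ∀ n ∈ Finset.range (N + 1),
      (2 / 3 : ℝ) ≤ Real.cos ((2 * n - N) * π * y) := by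
    intro n hn
    have hn' : n ≤ N := Nat.lt_succ_iff.mp (Finset.mem_range.mp hn)
    have habs : |(2 * (n:ℝ) - N) * π * y| ≤ 1 / 3 := by
      have h1 : |2 * (n:ℝ) - N| ≤ N := by
        rw [abs_le]; constructor <;> [push_cast; push_cast] <;>
          [nlinarith [Nat.cast_nonneg (α := ℝ) n]; nlinarith [(by exact_mod_cast hn' : (n:ℝ) ≤ N)]]
      have h2 : |(2 * (n:ℝ) - N) * π * y| = |2 * (n:ℝ) - N| * π * |y| := by
        rw [abs_mul, abs_mul, abs_of_pos hπ]
      rw [h2]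
      have hNpos : (0:ℝ) < N + 1 := by positivity
      calc |2 * (n:ℝ) - N| * π * |y| ≤ (N:ℝ) * π * (1 / (3 * π * (N + 1))) := by
            apply mul_le_mul (mul_le_mul_of_nonneg_right h1 hπ.le) hy (abs_nonneg _)
            positivity
        _ = (N:ℝ) / (3 * (N + 1)) := by field_simp
        _ ≤ 1 / 3 := by
            rw [div_le_div_iff₀ (by positivity) (by norm_num)]
            nlinarith [Nat.cast_nonneg (α := ℝ) N]
    have := Real.one_sub_sq_div_two_le_cos (x := (2 * (n:ℝ) - N) * π * y)
    nlinarith [_root_.sq_abs ((2 * (n:ℝ) - N) * π * y),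
      abs_nonneg ((2 * (n:ℝ) - N) * π * y),
      sq_nonneg (|(2 * (n:ℝ) - N) * π * y| - 1/3)]
  have hsum : (2 / 3 : ℝ) * (N + 1) ≤ (w * S).re := by
    rw [hre]
    have h := Finset.sum_le_sum hterm
    calc (2/3:ℝ) * (N+1) = ∑ _i ∈ Finset.range (N+1), (2/3:ℝ) := by
          rw [Finset.sum_const, Finset.card_range]; push_cast; ring
      _ ≤ _ := h
  have habs1 : ‖w‖ = 1 := Complex.norm_exp_ofReal_mul_I _
  calc (2 / 3 : ℝ) * (N + 1) ≤ (w * S).re := hsum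
    _ ≤ ‖w * S‖ := Complex.re_le_norm _
    _ = ‖S‖ := by rw [norm_mul, habs1, one_mul]

lemma arith_e1 (C₀ pv Nv θ γ : ℝ) (hC₀ : C₀ ≠ 0) (hpv : pv ≠ 0) (hNv : Nv ≠ 0) :
    ((C₀ ^ 2 * Nv)⁻¹ * ((2/3) * Nv) ^ 2) * (θ * (2 * (γ / (3 * pv * Nv))))
      = (θ * γ) * (8 / (27 * pv * C₀ ^ 2)) := by
  field_simp
  ring

lemma arith_e2 (c pv C₀ : ℝ) (hpv : pv ≠ 0) (hC₀ : C₀ ≠ 0) :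
    (c ^ 2 * (27 * pv * C₀ ^ 2) / 8) * (8 / (27 * pv * C₀ ^ 2)) = c ^ 2 := by
  field_simp

/-- Quantitative lower bound: from signs with `‖∑_{n=0}^N ε_n e_n‖_∞ ≤ C₀√(N+1)` for
infinitely many `N`, one gets, for every set `E` of positive measure and every
`c < (2√2)/(3√(3π) C₀)`, a continuous `f` with `‖f‖_∞ ≤ 1` and signs `ε` with
`‖T_ε[f]·𝟙_E‖₂ ≥ c`. -/
theorem stmt_10 (C₀ : ℝ) (hC₀ : 1 ≤ C₀) (ε₀ : ℕ → ℝ)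
    (hsgn : ∀ n, ε₀ n = 1 ∨ ε₀ n = -1)
    (hbound : ∃ᶠ N in atTop,
      ∀ t : UnitAddCircle,
        ‖∑ n ∈ Finset.range (N + 1), (ε₀ n : ℂ) * fourier (n : ℤ) t‖
          ≤ C₀ * Real.sqrt (N + 1)) :
    ∀ c : ℝ, 0 < c → c < 2 * Real.sqrt 2 / (3 * Real.sqrt (3 * Real.pi) * C₀) →
      ∀ E : Set UnitAddCircle, MeasurableSet E → 0 < muT E →
        ∃ f : C(UnitAddCircle, ℂ), (∀ t, ‖f t‖ ≤ 1) ∧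
          ∃ ε : ℤ → ℝ, IsSign ε ∧
            ∃ F : UnitAddCircle → ℂ, MemLp F 2 muT ∧
              Tendsto (fun N => eLpNorm (fun t => sgnSum f ε N t - F t) 2 muT)
                atTop (nhds 0) ∧
              ENNReal.ofReal c ≤ eLpNorm (E.indicator F) 2 muT := by
  intro c hc hclt E hE hEpos
  have hπ : (0:ℝ) < π := Real.pi_pos
  have hC₀pos : (0:ℝ) < C₀ := lt_of_lt_of_le one_pos hC₀
  -- the constant ρ < 1
  set ρ : ℝ := c ^ 2 * (27 * π * C₀ ^ 2) / 8 with hρdef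
  have hρpos : 0 < ρ := by positivity
  have hρlt : ρ < 1 := by
    have hcsq : c ^ 2 < (2 * Real.sqrt 2 / (3 * Real.sqrt (3 * π) * C₀)) ^ 2 :=
      pow_lt_pow_left₀ hclt hc.le (by norm_num)
    have h2 : Real.sqrt 2 ^ 2 = 2 := Real.sq_sqrt (by norm_num)
    have h3 : Real.sqrt (3 * π) ^ 2 = 3 * π := Real.sq_sqrt (by positivity)
    rw [div_pow, mul_pow, mul_pow, mul_pow, h2, h3] at hcsq
    rw [hρdef, div_lt_one (by norm_num)]
    calc c^2 * (27*π*C₀^2) < (2^2*2/((3:ℝ)^2*(3*π)*C₀^2)) * (27*π*C₀^2) :=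
          mul_lt_mul_of_pos_right hcsq (by positivity)
      _ = 8 := by field_simp; ring
  set θ : ℝ := (1 + ρ) / 2 with hθdef
  have hθρ : ρ < θ := by rw [hθdef]; linarith
  have hθ1 : θ < 1 := by rw [hθdef]; linarith
  have hθpos : 0 < θ := lt_trans hρpos hθρ
  set γ : ℝ := ρ / θ with hγdef
  have hγpos : 0 < γ := div_pos hρpos hθpos
  have hγ1 : γ < 1 := (div_lt_one hθpos).2 hθρ
  have hθγ : θ * γ = ρ := by rw [hγdef]; field_simp
  -- volume = muT
  have hvol : (volume : Measure UnitAddCircle) = muT := by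
    rw [muT, AddCircle.volume_eq_smul_haarAddCircle]; simp
  -- density point
  have hne : (ae ((volume : Measure UnitAddCircle).restrict E)).NeBot := by
    rw [ae_neBot]
    intro h0
    have := congrArg (fun m : Measure UnitAddCircle => m Set.univ) h0
    simp only [Measure.restrict_apply_univ, Measure.coe_zero, Pi.zero_apply] at this
    rw [hvol] at this
    exact hEpos.ne' this
  obtain ⟨x₀, hx₀⟩ := (IsUnifLocDoublingMeasure.ae_tendsto_measure_inter_div
      (volume : Measure UnitAddCircle) E 1).exists
  -- the radii
  set δseq : ℕ → ℝ := fun N => γ / (3 * π * (N + 1)) with hδdef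
  have hδpos : ∀ N, 0 < δseq N := fun N => by rw [hδdef]; positivity
  have htδ : Tendsto δseq atTop (𝓝[>] (0:ℝ)) := by
    rw [tendsto_nhdsWithin_iff]
    constructor
    · have h1 : Tendsto (fun N : ℕ => (γ / (3*π)) * (1 / (N + 1))) atTop (𝓝 ((γ/(3*π)) * 0)) :=
        tendsto_one_div_add_atTop_nhds_zero_nat.const_mul _
      rw [mul_zero] at h1
      convert h1 using 2 with N
      rw [hδdef]
      field_simp
    · exact Eventually.of_forall fun N => hδpos N
  have hratio := hx₀ (fun _ : ℕ => x₀) δseq htδ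
    (Eventually.of_forall fun j => by
      simp only [Metric.mem_closedBall, dist_self, one_mul]
      exact (hδpos j).le)
  have hdens : ∀ᶠ N in atTop, ENNReal.ofReal θ ≤
      volume (E ∩ Metric.closedBall x₀ (δseq N)) / volume (Metric.closedBall x₀ (δseq N)) :=
    hratio.eventually (eventually_ge_nhds (by
      rw [← ENNReal.ofReal_one]
      exact ENNReal.ofReal_lt_ofReal_iff_of_nonneg hθpos.le |>.2 hθ1))
  obtain ⟨N, hbN, hdN⟩ := (hbound.and_eventually hdens).exists
  -- representative of x₀
  obtain ⟨x₀r, rfl⟩ := QuotientAddGroup.mk_surjective x₀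
  set r : ℝ := δseq N with hrdef
  have hrpos : 0 < r := hδpos N
  have hrle : r ≤ 1 / (3 * π * (N + 1)) := by
    rw [hrdef, hδdef]
    rw [div_le_div_iff₀ (by positivity) (by positivity)]
    have hpos : (0:ℝ) < 3 * π * ((N:ℝ) + 1) := by positivity
    nlinarith [hγ1, hpos]
  have hrhalf : 2 * r ≤ 1 := by
    have hN1 : (1:ℝ) ≤ (N:ℝ) + 1 := by linarith [Nat.cast_nonneg (α := ℝ) N]
    have h9 : (9:ℝ) ≤ 3 * π * ((N:ℝ)+1) := by nlinarith [Real.pi_gt_three]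
    have h19 : 1 / (3*π*((N:ℝ)+1)) ≤ 1/9 :=
      one_div_le_one_div_of_le (by norm_num) h9
    nlinarith [hrle]
  -- construction of f
  have hsqpos : (0:ℝ) < Real.sqrt (N + 1) := Real.sqrt_pos.2 (by positivity)
  set coeff : ℝ := (C₀ * Real.sqrt (N + 1))⁻¹ with hcoeffdef
  have hcoeffpos : 0 < coeff := by rw [hcoeffdef]; positivity
  set a : ℕ → ℂ := fun n => (coeff : ℂ) * (ε₀ n : ℂ) * fourier (n : ℤ) ((-x₀r : ℝ) : UnitAddCircle)
    with hadef
  set f : C(UnitAddCircle, ℂ) :=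
    ∑ n ∈ Finset.range (N + 1), a n • fourier (n : ℤ) with hfdef
  have hfapp : ∀ t, f t = ∑ n ∈ Finset.range (N + 1), a n * fourier (n : ℤ) t := by
    intro t
    rw [hfdef]
    simp [ContinuousMap.coe_sum, Finset.sum_apply, smul_eq_mul]
  -- combining characters
  have hchar : ∀ (n : ℕ) (s : ℝ),
      fourier (n : ℤ) ((-x₀r : ℝ) : UnitAddCircle) * fourier (n : ℤ) ((s : ℝ) : UnitAddCircle)
        = fourier (n : ℤ) ((s - x₀r : ℝ) : UnitAddCircle) := by
    intro n s
    rw [fourier_coe_apply, fourier_coe_apply, fourier_coe_apply, ← Complex.exp_add]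
    congr 1
    push_cast
    ring
  -- sup bound on f
  have hfbound : ∀ t, ‖f t‖ ≤ 1 := by
    intro t
    obtain ⟨s, rfl⟩ := QuotientAddGroup.mk_surjective t
    have heq : f ((s : ℝ) : UnitAddCircle)
        = (coeff : ℂ) * ∑ n ∈ Finset.range (N + 1),
            (ε₀ n : ℂ) * fourier (n : ℤ) ((s - x₀r : ℝ) : UnitAddCircle) := by
      rw [hfapp, Finset.mul_sum]
      refine Finset.sum_congr rfl fun n _ => ?_
      rw [hadef]
      simp only []
      rw [mul_assoc ((coeff : ℂ) * (ε₀ n : ℂ)), hchar n s]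
      ring
    rw [heq, norm_mul]
    have h1 : ‖(coeff : ℂ)‖ = coeff := by
      rw [Complex.norm_real, Real.norm_of_nonneg hcoeffpos.le]
    rw [h1]
    calc coeff * ‖∑ n ∈ Finset.range (N + 1),
          (ε₀ n : ℂ) * fourier (n : ℤ) ((s - x₀r : ℝ) : UnitAddCircle)‖
        ≤ coeff * (C₀ * Real.sqrt (N + 1)) :=
          mul_le_mul_of_nonneg_left (hbN _) hcoeffpos.le
      _ = 1 := by rw [hcoeffdef]; field_simp
  -- Fourier coefficients of f
  have hcoef : ∀ m : ℤ, fourierCoeff (⇑f) m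
      = ∑ n ∈ Finset.range (N + 1), a n * (if m = (n : ℤ) then 1 else 0) := by
    intro m
    have hf' : ⇑f = fun t => ∑ n ∈ Finset.range (N + 1), a n * fourier (n : ℤ) t := by
      funext t; exact hfapp t
    rw [hf', fourierCoeff_finsum _ (fun n t => a n * fourier (n : ℤ) t) (fun n => continuous_const.mul (fourier _).continuous)]
    refine Finset.sum_congr rfl fun n _ => ?_
    rw [fourierCoeff.const_mul, fourierCoeff_fourier1]
  -- the signs
  set ε : ℤ → ℝ := fun n => if 0 ≤ n then ε₀ n.toNat else 1 with hεdef
  have hεsign : IsSign ε := by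
    intro n
    simp only [hεdef]
    split_ifs with h
    · exact hsgn n.toNat
    · exact Or.inl rfl
  -- the limit function
  set F : UnitAddCircle → ℂ := fun t => ∑ n ∈ Finset.range (N + 1),
      ((coeff : ℂ) * fourier (n : ℤ) ((-x₀r : ℝ) : UnitAddCircle)) * fourier (n : ℤ) t
    with hFdef
  have hFcont : Continuous F := by
    rw [hFdef]
    exact continuous_finset_sum _ fun n _ => continuous_const.mul (fourier _).continuous
  have hFmem : MemLp F 2 muT := by
    have : IsFiniteMeasure muT := by rw [muT]; infer_instance
    refine MemLp.of_bound hFcont.aestronglyMeasurable ((N + 1 : ℝ) * coeff)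
      (Eventually.of_forall fun t => ?_)
    rw [hFdef]
    calc ‖∑ n ∈ Finset.range (N + 1),
          ((coeff : ℂ) * fourier (n : ℤ) ((-x₀r : ℝ) : UnitAddCircle)) * fourier (n : ℤ) t‖
        ≤ ∑ n ∈ Finset.range (N + 1), ‖((coeff : ℂ)
            * fourier (n : ℤ) ((-x₀r : ℝ) : UnitAddCircle)) * fourier (n : ℤ) t‖ :=
          norm_sum_le _ _
      _ ≤ ∑ _n ∈ Finset.range (N + 1), coeff := by
          refine Finset.sum_le_sum fun n _ => ?_
          rw [norm_mul, norm_mul, Complex.norm_real, Real.norm_of_nonneg hcoeffpos.le]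
          have e1 : ‖fourier (n : ℤ) ((-x₀r : ℝ) : UnitAddCircle)‖ = 1 := by
            rw [fourier_apply, Circle.norm_coe]
          have e2 : ‖fourier (n : ℤ) t‖ = 1 := by
            rw [fourier_apply, Circle.norm_coe]
          rw [e1, e2]
          simp
      _ = (N + 1 : ℝ) * coeff := by
          rw [Finset.sum_const, Finset.card_range, nsmul_eq_mul]
          push_cast
          ring
  -- the partial sums are eventually equal to F
  have hkey : ∀ N' : ℕ, N ≤ N' → ∀ t, sgnSum (⇑f) ε N' t = F t := by
    intro N' hN' t
    rw [sgnSum]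
    have hsub : (Finset.range (N + 1)).map
        ⟨(fun n : ℕ => (n : ℤ)), fun _ _ h => Nat.cast_injective h⟩
          ⊆ Finset.Icc (-(N' : ℤ)) (N' : ℤ) := by
      intro m hm
      simp only [Finset.mem_map, Finset.mem_range, Function.Embedding.coeFn_mk] at hm
      obtain ⟨n, hn, rfl⟩ := hm
      simp only [Finset.mem_Icc]
      change -(N' : ℤ) ≤ (n : ℤ) ∧ (n : ℤ) ≤ N'
      constructor
      · have : (0:ℤ) ≤ n := Int.natCast_nonneg n
        omega
      · have : n ≤ N' := by omega
        exact_mod_cast this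
    rw [← Finset.sum_subset hsub ?van]
    case van =>
      intro m hm₁ hm₂
      have hz : fourierCoeff (⇑f) m = 0 := by
        rw [hcoef]
        refine Finset.sum_eq_zero fun n hn => ?_
        rw [if_neg, mul_zero]
        intro hmn
        apply hm₂
        simp only [Finset.mem_map, Finset.mem_range, Function.Embedding.coeFn_mk]
        exact ⟨n, Finset.mem_range.mp hn, hmn.symm⟩
      rw [hz, mul_zero, zero_mul]
    rw [Finset.sum_map, hFdef]
    refine Finset.sum_congr rfl fun n hn => ?_
    show (ε (n:ℤ) : ℂ) * fourierCoeff (⇑f) (n:ℤ) * fourier (n:ℤ) t = _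
    have hcn : fourierCoeff (⇑f) (n : ℤ) = a n := by
      rw [hcoef]
      rw [Finset.sum_eq_single n]
      · rw [if_pos rfl, mul_one]
      · intro b _ hb
        rw [if_neg (by exact_mod_cast fun h => hb (by exact_mod_cast h.symm)), mul_zero]
      · intro hn'
        exact absurd hn hn'
    have hεn : ε (n : ℤ) = ε₀ n := by
      rw [hεdef]
      simp
    rw [hcn, hεn, hadef]
    have hsq : (ε₀ n : ℂ) * (ε₀ n : ℂ) = 1 := by
      rcases hsgn n with h | h <;> rw [h] <;> norm_num
    calc (ε₀ n : ℂ) * ((coeff:ℂ) * (ε₀ n:ℂ) * fourier (n:ℤ) ((-x₀r : ℝ) : UnitAddCircle))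
          * fourier (n:ℤ) t
        = ((ε₀ n:ℂ) * (ε₀ n:ℂ))
            * (((coeff:ℂ) * fourier (n:ℤ) ((-x₀r:ℝ):UnitAddCircle)) * fourier (n:ℤ) t) := by
          ring
      _ = _ := by rw [hsq, one_mul]
  refine ⟨f, hfbound, ε, hεsign, F, hFmem, ?_, ?_⟩
  · -- convergence of the partial sums to F
    have hev : ∀ᶠ N' in atTop,
        eLpNorm (fun t => sgnSum (⇑f) ε N' t - F t) 2 muT = 0 := by
      filter_upwards [eventually_ge_atTop N] with N' hN'
      have hzz : (fun t => sgnSum (⇑f) ε N' t - F t) = fun _ => (0:ℂ) := by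
        funext t; rw [hkey N' hN' t, sub_self]
      rw [hzz]
      exact eLpNorm_zero'
    exact Tendsto.congr' (by filter_upwards [hev] with N' h using h.symm) tendsto_const_nhds
  · -- the lower bound
    have hC₀ne : C₀ ≠ 0 := hC₀pos.ne'
    have hπne : π ≠ 0 := hπ.ne'
    have hNne : ((N:ℝ) + 1) ≠ 0 := by positivity
    have hsqNe : Real.sqrt ((N:ℝ)+1) ≠ 0 := hsqpos.ne'
    set m : ℝ := coeff * ((2/3) * ((N:ℝ) + 1)) with hmdef
    have hmpos : 0 < m := by rw [hmdef]; positivity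
    set B : Set UnitAddCircle := Metric.closedBall ((x₀r : ℝ) : UnitAddCircle) r with hBdef
    -- pointwise lower bound for F on B
    have hFlow : ∀ u ∈ B, m ≤ ‖F u‖ := by
      intro u hu
      have hdist : ‖u - ((x₀r : ℝ) : UnitAddCircle)‖ ≤ r := by
        rw [← dist_eq_norm]
        exact Metric.mem_closedBall.mp hu
      obtain ⟨yv, hyv⟩ := QuotientAddGroup.mk_surjective (u - ((x₀r : ℝ) : UnitAddCircle))
      set y : ℝ := yv - round yv with hydef
      have hyc : ((y : ℝ) : UnitAddCircle) = u - ((x₀r : ℝ) : UnitAddCircle) := by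
        rw [hydef]
        have hz : (((round yv : ℝ)) : UnitAddCircle) = 0 := by
          rw [AddCircle.coe_eq_zero_iff]
          exact ⟨round yv, by simp⟩
        have hsub : ((yv - (round yv : ℝ) : ℝ) : UnitAddCircle)
            = ((yv : ℝ) : UnitAddCircle) - (((round yv : ℝ)) : UnitAddCircle) := rfl
        rw [hsub, hz, sub_zero, hyv]
      have hyabs : |y| ≤ r := by
        have h1 : ‖((yv : ℝ) : UnitAddCircle)‖ = |y| := by
          rw [UnitAddCircle.norm_eq, hydef]
        rw [← h1, hyv]
        exact hdist
      have hu' : u = ((x₀r + y : ℝ) : UnitAddCircle) := by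
        have hadd : ((x₀r + y : ℝ) : UnitAddCircle)
            = ((x₀r : ℝ) : UnitAddCircle) + ((y : ℝ) : UnitAddCircle) := rfl
        rw [hadd, hyc]
        abel
      have hFu : F u = (coeff : ℂ)
          * ∑ n ∈ Finset.range (N + 1), Complex.exp (2 * π * Complex.I * n * y) := by
        rw [hu', hFdef, Finset.mul_sum]
        refine Finset.sum_congr rfl fun n _ => ?_
        rw [mul_assoc, fourier_coe_apply, fourier_coe_apply, ← Complex.exp_add]
        congr 1
        push_cast
        ring
      have hylem : |y| ≤ 1 / (3 * π * (N + 1)) := le_trans hyabs hrle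
      have hD := dirichlet_lower N y hylem
      rw [hFu, norm_mul, Complex.norm_real, Real.norm_of_nonneg hcoeffpos.le, hmdef]
      calc coeff * ((2/3) * ((N:ℝ)+1)) = coeff * ((2/3) * ((N:ℝ)+1)) := rfl
        _ ≤ coeff * ‖∑ n ∈ Finset.range (N + 1), Complex.exp (2 * π * Complex.I * n * y)‖ :=
            mul_le_mul_of_nonneg_left (by exact_mod_cast hD) hcoeffpos.le
    -- measure lower bound
    have hBvol : volume B = ENNReal.ofReal (2 * r) := by
      rw [hBdef, AddCircle.volume_closedBall, min_eq_right hrhalf]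
    have hBne0 : volume B ≠ 0 := by
      rw [hBvol]
      simp only [ne_eq, ENNReal.ofReal_eq_zero, not_le]
      linarith
    have hBnetop : volume B ≠ ⊤ := by rw [hBvol]; exact ENNReal.ofReal_ne_top
    have hmeas : ENNReal.ofReal (θ * (2 * r)) ≤ muT (E ∩ B) := by
      have h1 : ENNReal.ofReal θ * volume B ≤ volume (E ∩ B) := by
        have := hdN
        rw [ENNReal.le_div_iff_mul_le (Or.inl hBne0) (Or.inl hBnetop)] at this
        exact this
      rw [← hvol, ENNReal.ofReal_mul hθpos.le, ← hBvol]
      exact h1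
    -- the real arithmetic
    have hc2 : coeff ^ 2 = (C₀ ^ 2 * ((N:ℝ) + 1))⁻¹ := by
      rw [hcoeffdef, inv_pow, mul_pow, Real.sq_sqrt (by positivity : (0:ℝ) ≤ (N:ℝ)+1)]
    have hθγ' : θ * γ = c ^ 2 * (27 * π * C₀ ^ 2) / 8 := by rw [hθγ]
    have hr' : r = γ / (3 * π * ((N:ℝ) + 1)) := rfl
    have hkeyeq : m ^ 2 * (θ * (2 * r)) = c ^ 2 := by
      have e1 : m ^ 2 * (θ * (2 * r)) = (θ * γ) * (8 / (27 * π * C₀ ^ 2)) := by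
        rw [hmdef, mul_pow, hc2, hr']
        exact arith_e1 C₀ π ((N:ℝ)+1) θ γ hC₀ne hπne hNne
      rw [e1, hθγ']
      exact arith_e2 c π C₀ hπne hC₀ne
    -- lintegral lower bound
    have hindmeas : MeasurableSet (E ∩ B) := hE.inter Metric.isClosed_closedBall.measurableSet
    have hint : ENNReal.ofReal (c ^ 2)
        ≤ ∫⁻ t, (‖E.indicator F t‖₊ : ℝ≥0∞) ^ (2:ℝ) ∂muT := by
      have s1 : ∫⁻ t in E ∩ B, (ENNReal.ofReal m) ^ (2:ℝ) ∂muT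
          ≤ ∫⁻ t in E ∩ B, (‖E.indicator F t‖₊ : ℝ≥0∞) ^ (2:ℝ) ∂muT := by
        refine setLIntegral_mono' hindmeas fun t ht => ?_
        refine ENNReal.rpow_le_rpow ?_ (by norm_num)
        rw [Set.indicator_of_mem ht.1, ← ENNReal.ofReal_coe_nnreal, coe_nnnorm]
        exact ENNReal.ofReal_le_ofReal (hFlow t ht.2)
      have s2 : ∫⁻ t in E ∩ B, (‖E.indicator F t‖₊ : ℝ≥0∞) ^ (2:ℝ) ∂muT
          ≤ ∫⁻ t, (‖E.indicator F t‖₊ : ℝ≥0∞) ^ (2:ℝ) ∂muT :=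
        setLIntegral_le_lintegral _ _
      have s3 : ENNReal.ofReal (c ^ 2)
          ≤ ∫⁻ _t in E ∩ B, (ENNReal.ofReal m) ^ (2:ℝ) ∂muT := by
        rw [setLIntegral_const]
        have hx : (m ^ 2 : ℝ) = m ^ (2:ℝ) := by
          rw [← Real.rpow_natCast m 2]; norm_num
        have e2 : (ENNReal.ofReal m) ^ (2:ℝ) = ENNReal.ofReal (m ^ 2) := by
          rw [hx, ENNReal.ofReal_rpow_of_nonneg hmpos.le (by norm_num : (0:ℝ) ≤ 2)]
        rw [e2]
        calc ENNReal.ofReal (c ^ 2) = ENNReal.ofReal (m ^ 2 * (θ * (2 * r))) := by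
              rw [hkeyeq]
          _ = ENNReal.ofReal (m ^ 2) * ENNReal.ofReal (θ * (2 * r)) := by
              rw [ENNReal.ofReal_mul (by positivity)]
          _ ≤ ENNReal.ofReal (m ^ 2) * muT (E ∩ B) :=
              mul_le_mul_right hmeas _
      exact s3.trans (s1.trans s2)
    -- conclude
    have h2t : ((2:ℝ≥0∞)).toReal = 2 := by simp
    rw [eLpNorm_eq_lintegral_rpow_enorm_toReal (by norm_num) (by norm_num), h2t]
    have hcc : ENNReal.ofReal c = (ENNReal.ofReal (c ^ 2)) ^ ((1:ℝ)/2) := by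
      have hx : (c ^ 2 : ℝ) = c ^ (2:ℝ) := by
        rw [← Real.rpow_natCast c 2]; norm_num
      rw [hx, ← ENNReal.ofReal_rpow_of_nonneg hc.le (by norm_num : (0:ℝ) ≤ 2),
        ← ENNReal.rpow_mul]
      norm_num
    rw [hcc]
    exact ENNReal.rpow_le_rpow hint (by norm_num)
end

section
/- Let f ∈ L∞(𝕋) be such that f̂(n) is real for every n ∈ ℤ and such that sup ‖S_{σ,N}[f]‖_∞ < ∞, the supremum being over all bijections σ : ℤ → ℤ and all N ∈ ℕ. Let g ∈ L²(𝕋) be the function with ĝ(n) = |f̂(n)| for all n ∈ ℤ. Then sup ‖S_{σ,N}[g]‖_∞ < ∞, where again the supremum is over all bijections σ : ℤ → ℤ and all N ∈ ℕ. -/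
open MeasureTheory Filter Topology ComplexConjugate
open scoped ENNReal

private lemma contT (c : ℤ → ℂ) (A : Finset ℤ) :
    Continuous (fun t : UnitAddCircle => ∑ n ∈ A, c n * fourier n t) :=
  continuous_finset_sum _ fun n _ => continuous_const.mul (map_continuous (fourier n))

/-- Any odd-cardinality finset of `ℤ` is the image of `Icc (-N) N` under some permutation. -/
private lemma exists_perm_image (A : Finset ℤ) (N : ℕ) (hA : A.card = 2 * N + 1) :
    ∃ σ : ℤ ≃ ℤ, Finset.image σ (Finset.Icc (-(N : ℤ)) (N : ℤ)) = A := by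
  classical
  set I : Finset ℤ := Finset.Icc (-(N : ℤ)) (N : ℤ) with hI
  have hcardI : I.card = 2 * N + 1 := by rw [hI, Int.card_Icc]; omega
  have hcard : I.card = A.card := by rw [hcardI, hA]
  let e : {x // x ∈ I} ≃ {x // x ∈ A} := Finset.equivOfCardEq hcard
  have hinfI : {x : ℤ | ¬ x ∈ I}.Infinite := by
    have := Set.Finite.infinite_compl (s := (I : Set ℤ)) I.finite_toSet
    convert this using 1
    ext x; simp
  have hinfA : {x : ℤ | ¬ x ∈ A}.Infinite := by
    have := Set.Finite.infinite_compl (s := (A : Set ℤ)) A.finite_toSet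
    convert this using 1
    ext x; simp
  haveI : Infinite {x : ℤ // ¬ x ∈ I} := hinfI.to_subtype
  haveI : Infinite {x : ℤ // ¬ x ∈ A} := hinfA.to_subtype
  haveI dI : Denumerable {x : ℤ // ¬ x ∈ I} :=
    Classical.choice (nonempty_denumerable _)
  haveI dA : Denumerable {x : ℤ // ¬ x ∈ A} :=
    Classical.choice (nonempty_denumerable _)
  let e' : {x : ℤ // ¬ x ∈ I} ≃ {x : ℤ // ¬ x ∈ A} :=
    (Denumerable.eqv _).trans (Denumerable.eqv _).symm
  refine ⟨Equiv.subtypeCongr e e', ?_⟩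
  have hsub : Finset.image (Equiv.subtypeCongr e e') I ⊆ A := by
    intro m hm
    rcases Finset.mem_image.1 hm with ⟨x, hx, rfl⟩
    have : Equiv.subtypeCongr e e' x = (e ⟨x, hx⟩ : ℤ) := by
      simp [Equiv.subtypeCongr, hx]
    rw [this]
    exact (e ⟨x, hx⟩).2
  refine Finset.eq_of_subset_of_card_le hsub ?_
  rw [Finset.card_image_of_injective _ (Equiv.injective _), hcard]

/-- Key bound: every finite-set "partial sum" of `f`'s Fourier series is bounded by `2 M`. -/
private lemma finset_sum_bound (f : UnitAddCircle → ℂ) (M : ℝ≥0∞)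
    (hM : ∀ (σ : ℤ ≃ ℤ) (N : ℕ), eLpNorm (fun t => rSum f σ N t) ⊤ muT ≤ M)
    (A : Finset ℤ) :
    eLpNorm (fun t => ∑ n ∈ A, fourierCoeff f n * fourier n t) ⊤ muT ≤ M + M := by
  classical
  -- odd case as auxiliary statement
  have odd_case : ∀ (B : Finset ℤ) (N : ℕ), B.card = 2 * N + 1 →
      eLpNorm (fun t => ∑ n ∈ B, fourierCoeff f n * fourier n t) ⊤ muT ≤ M := by
    intro B N hB
    obtain ⟨σ, hσ⟩ := exists_perm_image B N hB
    have hre : (fun t => ∑ n ∈ B, fourierCoeff f n * fourier n t)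
        = fun t => rSum f σ N t := by
      funext t
      rw [rSum, ← hσ, Finset.sum_image (fun x _ y _ h => σ.injective h)]
    rw [hre]; exact hM σ N
  rcases Nat.even_or_odd A.card with hev | hodd
  · rcases Finset.eq_empty_or_nonempty A with rfl | hne
    · have hz : (fun t : UnitAddCircle => ∑ n ∈ (∅ : Finset ℤ),
          fourierCoeff f n * fourier n t) = 0 := by funext t; simp
      rw [hz, eLpNorm_zero]; exact zero_le
    · obtain ⟨m, hm⟩ := Infinite.exists_notMem_finset A
      have hcard : (insert m A).card = A.card + 1 := Finset.card_insert_of_notMem hm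
      obtain ⟨N, hN⟩ : ∃ N : ℕ, (insert m A).card = 2 * N + 1 := by
        rcases hev with ⟨k, hk⟩
        exact ⟨k, by omega⟩
      have hsplit : (fun t : UnitAddCircle => ∑ n ∈ A, fourierCoeff f n * fourier n t)
          = (fun t : UnitAddCircle => ∑ n ∈ insert m A, fourierCoeff f n * fourier n t)
            - (fun t : UnitAddCircle => ∑ n ∈ ({m} : Finset ℤ), fourierCoeff f n * fourier n t) := by
        funext t
        simp [Finset.sum_insert hm]
      rw [hsplit]
      have h1 := odd_case (insert m A) N hN
      have h2 : eLpNorm (fun t => ∑ n ∈ ({m} : Finset ℤ),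
          fourierCoeff f n * fourier n t) ⊤ muT ≤ M := by
        refine odd_case {m} 0 (by simp)
      calc eLpNorm _ ⊤ muT ≤ _ + _ :=
            eLpNorm_sub_le ((contT _ _).aestronglyMeasurable)
              ((contT _ _).aestronglyMeasurable) le_top
        _ ≤ M + M := add_le_add h1 h2
  · rcases hodd with ⟨k, hk⟩
    have := odd_case A k (by omega)
    exact this.trans (le_add_self.trans le_rfl)

/-- If `f ∈ L∞` has real Fourier coefficients and uniformly bounded rearranged partial sums,
and `g ∈ L²` satisfies `ĝ(n) = |f̂(n)|`, then `g` has uniformly bounded rearranged partial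
sums as well. -/
theorem stmt_15 (f g : UnitAddCircle → ℂ) (hf : MemLp f ⊤ muT)
    (hreal : ∀ n : ℤ, (fourierCoeff f n).im = 0)
    (hbd : (⨆ (σ : ℤ ≃ ℤ) (N : ℕ), eLpNorm (fun t => rSum f σ N t) ⊤ muT) < ⊤)
    (hg : MemLp g 2 muT)
    (hgc : ∀ n : ℤ, fourierCoeff g n = ((‖fourierCoeff f n‖ : ℝ) : ℂ)) :
    (⨆ (σ : ℤ ≃ ℤ) (N : ℕ), eLpNorm (fun t => rSum g σ N t) ⊤ muT) < ⊤ := by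
  classical
  set M := ⨆ (σ : ℤ ≃ ℤ) (N : ℕ), eLpNorm (fun t => rSum f σ N t) ⊤ muT with hMdef
  have hM : ∀ (σ : ℤ ≃ ℤ) (N : ℕ), eLpNorm (fun t => rSum f σ N t) ⊤ muT ≤ M :=
    fun σ N => le_iSup₂ (f := fun σ N => eLpNorm (fun t => rSum f σ N t) ⊤ muT) σ N
  have key : ∀ (σ : ℤ ≃ ℤ) (N : ℕ),
      eLpNorm (fun t => rSum g σ N t) ⊤ muT ≤ (M + M) + (M + M) := by
    intro σ N
    set I : Finset ℤ := Finset.Icc (-(N : ℤ)) (N : ℤ) with hI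
    set S : Finset ℤ := Finset.image σ I with hS
    set P : Finset ℤ := S.filter (fun m => 0 ≤ (fourierCoeff f m).re) with hP
    set Q : Finset ℤ := S.filter (fun m => ¬ 0 ≤ (fourierCoeff f m).re) with hQ
    -- coefficient identities
    have habs : ∀ m : ℤ, ((‖fourierCoeff f m‖ : ℝ) : ℂ)
        = if 0 ≤ (fourierCoeff f m).re then fourierCoeff f m else -(fourierCoeff f m) := by
      intro m
      have hm : fourierCoeff f m = ((fourierCoeff f m).re : ℂ) :=
        Complex.ext rfl (by simp [hreal m])
      by_cases h : 0 ≤ (fourierCoeff f m).re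
      · rw [if_pos h, hm, Complex.norm_real, Real.norm_eq_abs, abs_of_nonneg h]
      · rw [if_neg h]
        rw [hm, Complex.norm_real, Real.norm_eq_abs, abs_of_neg (lt_of_not_ge h)]
        push_cast
        ring
    have hsplit : (fun t => rSum g σ N t)
        = (fun t => ∑ n ∈ P, fourierCoeff f n * fourier n t)
          - (fun t => ∑ n ∈ Q, fourierCoeff f n * fourier n t) := by
      funext t
      have h1 : rSum g σ N t = ∑ m ∈ S, ((‖fourierCoeff f m‖ : ℝ) : ℂ) * fourier m t := by
        rw [hS, Finset.sum_image (fun x _ y _ h => σ.injective h), rSum]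
        exact Finset.sum_congr rfl fun n _ => by rw [hgc]
      rw [h1]
      have h2 : ∑ m ∈ S, ((‖fourierCoeff f m‖ : ℝ) : ℂ) * fourier m t
          = ∑ m ∈ P, fourierCoeff f m * fourier m t
            + ∑ m ∈ Q, -(fourierCoeff f m) * fourier m t := by
        rw [hP, hQ, ← Finset.sum_filter_add_sum_filter_not S (fun m => 0 ≤ (fourierCoeff f m).re)]
        congr 1
        · exact Finset.sum_congr rfl fun m hm => by
            rw [habs m, if_pos (Finset.mem_filter.1 hm).2]
        · exact Finset.sum_congr rfl fun m hm => by
            rw [habs m, if_neg (Finset.mem_filter.1 hm).2]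
      rw [h2]
      simp [sub_eq_add_neg, Finset.sum_neg_distrib]
    rw [hsplit]
    calc eLpNorm _ ⊤ muT ≤ _ + _ :=
          eLpNorm_sub_le ((contT _ _).aestronglyMeasurable)
            ((contT _ _).aestronglyMeasurable) le_top
      _ ≤ (M + M) + (M + M) :=
          add_le_add (finset_sum_bound f M hM P) (finset_sum_bound f M hM Q)
  have hfin : ((M + M) + (M + M)) < ⊤ := by
    have hMt : M < ⊤ := hbd
    exact ENNReal.add_lt_top.2 ⟨ENNReal.add_lt_top.2 ⟨hMt, hMt⟩,
      ENNReal.add_lt_top.2 ⟨hMt, hMt⟩⟩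
  exact lt_of_le_of_lt (iSup₂_le key) hfin
end
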